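/- Let M₂ be the abstract monoid presented by generators A, B, C, c with relations CAA = AC, CB = BBC, CAB = BAc, cA = AAc, cBB = Bc, cBA = ABC, Cc = 1, cC = 1. Then the string rewriting system obtained by orienting each relation left-to-right is terminating: there is no infinite sequence of rewrites. -/

import Mathlib

/-- The alphabet {A, B, C, c}. -/
inductive Letter | A | B | C | c
  deriving DecidableEq

open Letter

/-- The rewriting rules of the presentation of the Lodha–Moore monoid M₂, oriented
    left-to-right: CAA → AC, CB → BBC, CAB → BAc, cA → AAc, cBB → Bc, cBA → ABC,
    Cc → 1, cC → 1. -/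
def rules : List (List Letter × List Letter) :=
  [([C, A, A], [A, C]), ([C, B], [B, B, C]), ([C, A, B], [B, A, c]),
   ([c, A], [A, A, c]), ([c, B, B], [B, c]), ([c, B, A], [A, B, C]),
   ([C, c], []), ([c, C], [])]

/-- One rewriting step: replace an occurrence of a left-hand side with the
    corresponding right-hand side. -/
def Step (w w' : List Letter) : Prop :=
  ∃ p ∈ rules, ∃ u v : List Letter, w = u ++ p.1 ++ v ∧ w' = u ++ p.2 ++ v

/-- Interpretation of each letter as a strictly monotone function on ℕ. -/
def interp : Letter → ℕ → ℕ
  | A, x => x + 1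
  | B, x => x + 1
  | C, x => 4 ^ x
  | c, x => 4 ^ x

/-- The measure of a word. -/
def mu (w : List Letter) : ℕ := w.foldr interp 0

lemma interp_strictMono (l : Letter) : StrictMono (interp l) := by
  cases l <;> intro x y hxy <;> simp [interp] <;>
    first
      | omega
      | exact Nat.pow_lt_pow_right (by norm_num) hxy

lemma foldr_strictMono (u : List Letter) : StrictMono (fun x => u.foldr interp x) := by
  induction u with
  | nil => exact strictMono_id
  | cons l u ih => exact fun x y h => interp_strictMono l (ih h)

lemma mu_append (u v : List Letter) : mu (u ++ v) = u.foldr interp (mu v) := by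
  simp [mu, List.foldr_append]

lemma self_lt_pow (x : ℕ) : x < 4 ^ x := Nat.lt_pow_self (by norm_num : 1 < 4)

lemma one_le_pow (x : ℕ) : 1 ≤ 4 ^ x := Nat.one_le_pow _ _ (by norm_num)

lemma step_decreases {w w' : List Letter} (h : Step w w') : mu w' < mu w := by
  obtain ⟨p, hp, u, v, rfl, rfl⟩ := h
  simp only [List.append_assoc, mu_append]
  apply foldr_strictMono u
  set x := mu v with hx
  simp only [rules, List.mem_cons, List.not_mem_nil, or_false] at hp
  have h1 := self_lt_pow x
  have h2 := one_le_pow x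
  rcases hp with rfl | rfl | rfl | rfl | rfl | rfl | rfl | rfl <;>
    simp only [List.foldr_cons, List.foldr_nil, interp, ← hx] <;>
    first
      | (calc x < 4 ^ x := h1
          _ < 4 ^ (4 ^ x) := self_lt_pow _)
      | (ring_nf
         nlinarith [pow_le_pow_right₀ (show 1 ≤ 4 by norm_num)
            (show x ≤ x + 1 by omega),
          pow_le_pow_right₀ (show 1 ≤ 4 by norm_num) (show x ≤ x + 2 by omega),
          pow_succ 4 x, pow_succ 4 (x+1), h2])

lemma no_inf_descent : ¬ ∃ g : ℕ → ℕ, ∀ n, g (n + 1) < g n := by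
  rintro ⟨g, hg⟩
  have key : ∀ n, g n + n ≤ g 0 := by
    intro n
    induction n with
    | zero => omega
    | succ n ih => have := hg n; omega
  have := key (g 0 + 1)
  omega

/-- The string rewriting system is terminating: there is no infinite sequence of
    rewrites. -/
theorem stmt14 : ¬ ∃ f : ℕ → List Letter, ∀ n : ℕ, Step (f n) (f (n + 1)) := by
  rintro ⟨f, hf⟩
  exact no_inf_descent ⟨fun n => mu (f n), fun n => step_decreases (hf n)⟩
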